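/- Let V be a finite-dimensional real inner product space, M a symmetric positive definite linear operator on V, and f : V → ℝ differentiable with μ·(1/2)‖u−v‖²_M ≤ D_f(u,v) ≤ L·(1/2)‖u−v‖²_M for all u,v, where D_f(u,v) = f(u) − f(v) − ⟨∇f(v), u−v⟩ and 0 < μ ≤ L. Define e_M(ξ) = ξ − M ∇f*(ξ) where f* is the convex conjugate. If μ > 1/2, then for all ξ₁, ξ₂: ‖e_M(ξ₁) − e_M(ξ₂)‖²_{M⁻¹} ≤ (1 − (2μ−1)/(μL)) ‖ξ₁ − ξ₂‖²_{M⁻¹}. -/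

import Mathlib

open RealInnerProductSpace

private lemma posdef_lb {n : ℕ} (M : EuclideanSpace ℝ (Fin n) →ₗ[ℝ] EuclideanSpace ℝ (Fin n))
    (hMpos : ∀ x, x ≠ 0 → 0 < ⟪M x, x⟫) :
    ∃ c > 0, ∀ x : EuclideanSpace ℝ (Fin n), c * ‖x‖^2 ≤ ⟪M x, x⟫ := by
  have hMc : Continuous fun x : EuclideanSpace ℝ (Fin n) => (⟪M x, x⟫ : ℝ) :=
    (M.continuous_of_finiteDimensional).inner continuous_id
  rcases Nat.eq_zero_or_pos n with hn | hn
  · refine ⟨1, one_pos, fun x => ?_⟩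
    subst hn
    have hx : x = 0 := Subsingleton.elim x 0
    simp [hx]
  · have hsne : (Metric.sphere (0 : EuclideanSpace ℝ (Fin n)) 1).Nonempty := by
      refine ⟨EuclideanSpace.single ⟨0, hn⟩ 1, ?_⟩
      simp [EuclideanSpace.norm_single]
    obtain ⟨x₀, hx₀S, hx₀min⟩ :=
      (isCompact_sphere (0 : EuclideanSpace ℝ (Fin n)) 1).exists_isMinOn hsne hMc.continuousOn
    have hx₀norm : ‖x₀‖ = 1 := by simpa using hx₀S
    have hx₀ne : x₀ ≠ 0 := by
      intro h; rw [h] at hx₀norm; simp at hx₀norm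
    refine ⟨⟪M x₀, x₀⟫, hMpos x₀ hx₀ne, fun x => ?_⟩
    by_cases hx : x = 0
    · simp [hx]
    · have hxn : 0 < ‖x‖ := norm_pos_iff.mpr hx
      set y : EuclideanSpace ℝ (Fin n) := ‖x‖⁻¹ • x with hy
      have hyS : y ∈ Metric.sphere (0 : EuclideanSpace ℝ (Fin n)) 1 := by
        simp [hy, norm_smul, abs_of_pos (inv_pos.mpr hxn), inv_mul_cancel₀ hxn.ne']
      have hle : ⟪M x₀, x₀⟫ ≤ ⟪M y, y⟫ := hx₀min hyS
      have hyy : ⟪M y, y⟫ = ‖x‖⁻¹ * (‖x‖⁻¹ * ⟪M x, x⟫) := by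
        rw [hy, map_smul, real_inner_smul_left, real_inner_smul_right]
      rw [hyy] at hle
      have h2 := mul_le_mul_of_nonneg_right hle (by positivity : (0:ℝ) ≤ ‖x‖^2)
      have heq : ‖x‖⁻¹ * (‖x‖⁻¹ * ⟪M x, x⟫) * ‖x‖^2 = ⟪M x, x⟫ := by
        field_simp
      rw [heq] at h2
      exact h2

set_option maxHeartbeats 1000000 in
/-- Lemma 6.1 (quantitative part): under strong convexity `μ > 1/2` in the `M`-metric,
the map `e_M(ξ) = ξ - M ∇f*(ξ)` is a contraction with factor `1 - (2μ-1)/(μL)`. -/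
theorem stmt_0 {n : ℕ} (f : EuclideanSpace ℝ (Fin n) → ℝ) (hf : Differentiable ℝ f)
    (M Minv : EuclideanSpace ℝ (Fin n) →ₗ[ℝ] EuclideanSpace ℝ (Fin n))
    (hMsym : ∀ x y, ⟪M x, y⟫ = ⟪x, M y⟫)
    (hMpos : ∀ x, x ≠ 0 → 0 < ⟪M x, x⟫)
    (hMinv : Minv ∘ₗ M = LinearMap.id) (hMinv' : M ∘ₗ Minv = LinearMap.id)
    (μ L : ℝ) (hμ0 : 0 < μ) (hμL : μ ≤ L)
    (hlow : ∀ u v, μ * (1/2 * ⟪M (u - v), u - v⟫) ≤ f u - f v - ⟪gradient f v, u - v⟫)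
    (hup : ∀ u v, f u - f v - ⟪gradient f v, u - v⟫ ≤ L * (1/2 * ⟪M (u - v), u - v⟫))
    (hμhalf : 1/2 < μ)
    (fstar : EuclideanSpace ℝ (Fin n) → ℝ)
    (hfstar : ∀ ξ, fstar ξ = ⨆ u, (⟪ξ, u⟫ - f u))
    (eM : EuclideanSpace ℝ (Fin n) → EuclideanSpace ℝ (Fin n))
    (heM : ∀ ξ, eM ξ = ξ - M (gradient fstar ξ)) :
    ∀ ξ₁ ξ₂,
      ⟪Minv (eM ξ₁ - eM ξ₂), eM ξ₁ - eM ξ₂⟫ ≤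
        (1 - (2*μ - 1)/(μ*L)) * ⟪Minv (ξ₁ - ξ₂), ξ₁ - ξ₂⟫ := by
  have hL0 : 0 < L := lt_of_lt_of_le hμ0 hμL
  have hMid : ∀ y : EuclideanSpace ℝ (Fin n), M (Minv y) = y := by
    intro y; have := LinearMap.ext_iff.mp hMinv' y; simpa using this
  have hidM : ∀ y : EuclideanSpace ℝ (Fin n), Minv (M y) = y := by
    intro y; have := LinearMap.ext_iff.mp hMinv y; simpa using this
  have hMnn : ∀ x : EuclideanSpace ℝ (Fin n), 0 ≤ ⟪M x, x⟫ := by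
    intro x
    rcases eq_or_ne x 0 with h | h
    · simp [h]
    · exact (hMpos x h).le
  have hMinvsym : ∀ x y : EuclideanSpace ℝ (Fin n), ⟪Minv x, y⟫ = ⟪x, Minv y⟫ := by
    intro x y
    calc ⟪Minv x, y⟫ = ⟪Minv x, M (Minv y)⟫ := by rw [hMid]
      _ = ⟪M (Minv x), Minv y⟫ := (hMsym _ _).symm
      _ = ⟪x, Minv y⟫ := by rw [hMid]
  obtain ⟨c, hc0, hcb⟩ := posdef_lb M hMpos
  obtain ⟨Cm, hCm0, hCmb⟩ : ∃ Cm : ℝ, 0 ≤ Cm ∧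
      ∀ x : EuclideanSpace ℝ (Fin n), ⟪M x, x⟫ ≤ Cm * ‖x‖^2 := by
    refine ⟨‖LinearMap.toContinuousLinearMap M‖, norm_nonneg _, fun x => ?_⟩
    have hb : ‖M x‖ ≤ ‖LinearMap.toContinuousLinearMap M‖ * ‖x‖ :=
      (LinearMap.toContinuousLinearMap M).le_opNorm x
    calc ⟪M x, x⟫ ≤ ‖M x‖ * ‖x‖ := real_inner_le_norm _ _
      _ ≤ ‖LinearMap.toContinuousLinearMap M‖ * ‖x‖ * ‖x‖ :=
          mul_le_mul_of_nonneg_right hb (norm_nonneg x)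
      _ = ‖LinearMap.toContinuousLinearMap M‖ * ‖x‖^2 := by ring
  -- strong monotonicity of the gradient
  have hmono : ∀ u v : EuclideanSpace ℝ (Fin n),
      μ * ⟪M (u - v), u - v⟫ ≤ ⟪gradient f u - gradient f v, u - v⟫ := by
    intro u v
    have h1 := hlow u v
    have h2 := hlow v u
    have e1 : v - u = -(u - v) := by abel
    rw [e1, map_neg, inner_neg_neg, inner_neg_right] at h2
    rw [inner_sub_left]
    linarith
  -- surjectivity of the gradient
  have hgrad0 : ∀ ξ : EuclideanSpace ℝ (Fin n), ∃ u, gradient f u = ξ := by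
    intro ξ
    have hφcont : Continuous fun v : EuclideanSpace ℝ (Fin n) => f v - ⟪ξ, v⟫ :=
      hf.continuous.sub (continuous_const.inner continuous_id)
    have hlb : ∀ v : EuclideanSpace ℝ (Fin n),
        μ * c / 2 * ‖v‖ ^ 2 - (‖gradient f 0‖ + ‖ξ‖) * ‖v‖ + f 0 ≤ f v - ⟪ξ, v⟫ := by
      intro v
      have h1 := hlow v 0
      simp only [sub_zero] at h1
      have h2 : c * ‖v‖^2 ≤ ⟪M v, v⟫ := hcb v
      have h5 := abs_le.mp (abs_real_inner_le_norm (gradient f 0) v)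
      have h6 := abs_le.mp (abs_real_inner_le_norm ξ v)
      nlinarith [h1, mul_le_mul_of_nonneg_left h2 hμ0.le, h5.1, h6.2]
    have htq : Filter.Tendsto (fun t : ℝ => μ * c / 2 * t ^ 2 - (‖gradient f 0‖ + ‖ξ‖) * t + f 0)
        Filter.atTop Filter.atTop := by
      have h1 : Filter.Tendsto
          (fun t : ℝ => t * (μ * c / 2 * t - (‖gradient f 0‖ + ‖ξ‖)) + f 0)
          Filter.atTop Filter.atTop := by
        apply Filter.tendsto_atTop_add_const_right
        exact Filter.tendsto_id.atTop_mul_atTop₀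
          (Filter.tendsto_atTop_add_const_right _ _
            (Filter.Tendsto.const_mul_atTop (by positivity) Filter.tendsto_id))
      exact h1.congr (fun t => by ring)
    have hco : Filter.Tendsto (fun v : EuclideanSpace ℝ (Fin n) => f v - ⟪ξ, v⟫)
        (Filter.cocompact _) Filter.atTop :=
      Filter.tendsto_atTop_mono hlb (htq.comp tendsto_norm_cocompact_atTop)
    obtain ⟨u, hu⟩ := hφcont.exists_forall_le hco
    refine ⟨u, ?_⟩
    by_contra hne
    set w := gradient f u - ξ with hw
    have hwne : w ≠ 0 := sub_ne_zero.mpr hne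
    have hMw : 0 < ⟪M w, w⟫ := hMpos w hwne
    have hwn : 0 < ‖w‖ := norm_pos_iff.mpr hwne
    set t : ℝ := ‖w‖^2 / (L * ⟪M w, w⟫) with ht
    have ht0 : 0 < t := by positivity
    have htmul : t * (L * ⟪M w, w⟫) = ‖w‖^2 := by
      rw [ht]; exact div_mul_cancel₀ _ (mul_pos hL0 hMw).ne'
    have h1 := hup (u - t • w) u
    have e1 : u - t • w - u = -(t • w) := by abel
    rw [e1] at h1
    simp only [map_neg, map_smul, inner_neg_neg, inner_neg_left, inner_neg_right, neg_neg,
      real_inner_smul_left, real_inner_smul_right] at h1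
    have h2 := hu (u - t • w)
    rw [inner_sub_right, real_inner_smul_right] at h2
    have hww : ⟪gradient f u, w⟫ - ⟪ξ, w⟫ = ‖w‖^2 := by
      rw [← inner_sub_left, ← hw, real_inner_self_eq_norm_sq]
    have h5 : t * (⟪gradient f u, w⟫ - ⟪ξ, w⟫) = t * ‖w‖^2 := by rw [hww]
    have h6 : t * (t * (L * ⟪M w, w⟫)) = t * ‖w‖^2 := by rw [htmul]
    nlinarith [h1, h2, h5, h6, mul_pos ht0 (mul_pos hwn hwn)]
  -- value of the conjugate at a point with a gradient preimage
  have hval : ∀ (ξ u : EuclideanSpace ℝ (Fin n)), gradient f u = ξ →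
      fstar ξ = ⟪ξ, u⟫ - f u := by
    intro ξ u hu
    have hub : ∀ v : EuclideanSpace ℝ (Fin n), ⟪ξ, v⟫ - f v ≤ ⟪ξ, u⟫ - f u := by
      intro v
      have h1 := hlow v u
      rw [hu] at h1
      have he : ⟪ξ, v - u⟫ = ⟪ξ, v⟫ - ⟪ξ, u⟫ := inner_sub_right _ _ _
      have h2 := hMnn (v - u)
      nlinarith [h1, he, h2, hμ0]
    rw [hfstar]
    apply le_antisymm
    · exact ciSup_le hub
    · exact le_ciSup ⟨⟪ξ, u⟫ - f u, by rintro y ⟨v, rfl⟩; exact hub v⟩ u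
  choose U hU using hgrad0
  -- distance bound between preimages
  have hdist : ∀ ξ η : EuclideanSpace ℝ (Fin n), ‖U ξ - U η‖ ≤ ‖ξ - η‖ / (μ * c) := by
    intro ξ η
    have h1 := hmono (U ξ) (U η)
    rw [hU, hU] at h1
    have h2 : ⟪ξ - η, U ξ - U η⟫ ≤ ‖ξ - η‖ * ‖U ξ - U η‖ := real_inner_le_norm _ _
    have h3 := hcb (U ξ - U η)
    rcases eq_or_ne (U ξ - U η) 0 with h | h
    · rw [h]; simp; positivity
    · have hdn : 0 < ‖U ξ - U η‖ := norm_pos_iff.mpr h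
      rw [le_div_iff₀ (by positivity)]
      nlinarith [h1, h2, mul_le_mul_of_nonneg_left h3 hμ0.le, hdn]
  -- the gradient of fstar
  have hgradstar : ∀ η : EuclideanSpace ℝ (Fin n), gradient fstar η = U η := by
    intro η
    set K : ℝ := 1/(μ*c) + L*Cm/(2*(μ*c)^2) with hKdef
    have hK : 0 < K := by
      have h1 : (0:ℝ) < 1/(μ*c) := by positivity
      have h2 : (0:ℝ) ≤ L*Cm/(2*(μ*c)^2) :=
        div_nonneg (mul_nonneg hL0.le hCm0) (by positivity)
      rw [hKdef]; linarith
    have habs : ∀ Kv sv Iv Dv gn dn Qv : ℝ, 0 ≤ Dv → Dv ≤ L * (1/2 * Qv) →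
        -(gn * dn) ≤ Iv → Iv ≤ gn * dn → Qv ≤ Cm * dn^2 → 0 ≤ sv →
        gn * dn ≤ gn * sv → dn^2 ≤ sv^2 → Kv * gn^2 = gn * sv + L*Cm/2 * sv^2 →
        |Iv - Dv| ≤ Kv * gn^2 := by
      intro Kv sv Iv Dv gn dn Qv hD0 hhi hip1 hip2 hQub hs0 h8 h9 hKg
      rw [abs_le]
      constructor
      · nlinarith [hhi, hip1, h8, hKg,
          mul_le_mul_of_nonneg_left hQub (by positivity : (0:ℝ) ≤ L/2),
          mul_le_mul_of_nonneg_left h9 (mul_nonneg hL0.le hCm0)]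
      · nlinarith [hD0, hip2, h8, hKg,
          mul_nonneg (mul_nonneg (mul_nonneg hL0.le hCm0) (by norm_num : (0:ℝ) ≤ 1/2))
            (mul_nonneg hs0 hs0)]
    have hE : ∀ ξ : EuclideanSpace ℝ (Fin n),
        |fstar ξ - fstar η - ⟪U η, ξ - η⟫| ≤ K * ‖ξ - η‖^2 := by
      intro ξ
      have hv1 : fstar ξ = ⟪ξ, U ξ⟫ - f (U ξ) := hval ξ (U ξ) (hU ξ)
      have hv2 : fstar η = ⟪η, U η⟫ - f (U η) := hval η (U η) (hU η)
      have hEeq : fstar ξ - fstar η - ⟪U η, ξ - η⟫ =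
          ⟪ξ - η, U ξ - U η⟫ - (f (U ξ) - f (U η) - ⟪η, U ξ - U η⟫) := by
        rw [hv1, hv2]
        simp only [inner_sub_left, inner_sub_right]
        rw [real_inner_comm (U η) ξ, real_inner_comm (U η) η]
        ring
      have hlo := hlow (U ξ) (U η)
      have hhi := hup (U ξ) (U η)
      rw [hU] at hlo hhi
      have hD0 : (0:ℝ) ≤ f (U ξ) - f (U η) - ⟪η, U ξ - U η⟫ :=
        le_trans (mul_nonneg hμ0.le (mul_nonneg (by norm_num) (hMnn _))) hlo
      have hip := abs_le.mp (abs_real_inner_le_norm (ξ - η) (U ξ - U η))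
      have hdle : ‖U ξ - U η‖ ≤ ‖ξ - η‖ / (μ * c) := hdist ξ η
      have hQub : ⟪M (U ξ - U η), U ξ - U η⟫ ≤ Cm * ‖U ξ - U η‖^2 := hCmb (U ξ - U η)
      have hs0 : (0:ℝ) ≤ ‖ξ - η‖ / (μ * c) := by positivity
      have h8 : ‖ξ - η‖ * ‖U ξ - U η‖ ≤ ‖ξ - η‖ * (‖ξ - η‖ / (μ * c)) :=
        mul_le_mul_of_nonneg_left hdle (norm_nonneg _)
      have h9 : ‖U ξ - U η‖^2 ≤ (‖ξ - η‖ / (μ * c))^2 := by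
        nlinarith [norm_nonneg (U ξ - U η), hdle]
      have hKg : K * ‖ξ - η‖^2 = ‖ξ - η‖ * (‖ξ - η‖ / (μ * c))
          + L*Cm/2 * (‖ξ - η‖ / (μ * c))^2 := by
        rw [hKdef]
        have hac : (μ*c) ≠ 0 := by positivity
        field_simp
      rw [hEeq]
      exact habs K (‖ξ - η‖ / (μ * c)) _ _ ‖ξ - η‖ ‖U ξ - U η‖ _
        hD0 hhi hip.1 hip.2 hQub hs0 h8 h9 hKg
    have hlit : (fun ξ : EuclideanSpace ℝ (Fin n) =>
        fstar ξ - fstar η - ⟪U η, ξ - η⟫) =o[nhds η] fun ξ => ξ - η := by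
      rw [Asymptotics.isLittleO_iff]
      intro ε hε
      filter_upwards [Metric.ball_mem_nhds η (by positivity : 0 < ε / K)] with ξ hξ
      have h1 : ‖ξ - η‖ < ε / K := by rw [Metric.mem_ball, dist_eq_norm] at hξ; exact hξ
      have h3 : K * ‖ξ - η‖ ≤ ε := (le_div_iff₀' hK).mp h1.le
      rw [Real.norm_eq_abs]
      calc |fstar ξ - fstar η - ⟪U η, ξ - η⟫| ≤ K * ‖ξ - η‖^2 := hE ξ
        _ ≤ ε * ‖ξ - η‖ := by nlinarith [h3, norm_nonneg (ξ - η)]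
    exact (hasGradientAt_iff_isLittleO.mpr hlit).gradient
  -- cocoercivity
  have hcoco : ∀ p q : EuclideanSpace ℝ (Fin n),
      1/(2*L) * ⟪Minv (gradient f p - gradient f q), gradient f p - gradient f q⟫ ≤
        f p - f q - ⟪gradient f q, p - q⟫ := by
    intro p q
    set gg := gradient f p - gradient f q with hgg
    set w := p - (1/L) • Minv gg with hw
    have e1 : w - p = -((1/L) • Minv gg) := by rw [hw]; abel
    have e2 : w - q = (p - q) - (1/L) • Minv gg := by rw [hw]; abel
    have h1 := hlow w q
    have h1' : (0:ℝ) ≤ f w - f q - ⟪gradient f q, w - q⟫ :=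
      le_trans (mul_nonneg hμ0.le (mul_nonneg (by norm_num) (hMnn _))) h1
    rw [e2, inner_sub_right, real_inner_smul_right] at h1'
    have h2 := hup w p
    rw [e1] at h2
    simp only [map_neg, map_smul, hMid, inner_neg_neg, inner_neg_left, inner_neg_right, neg_neg,
      real_inner_smul_left, real_inner_smul_right, sub_neg_eq_add] at h2
    have h3 : ⟪gradient f p, Minv gg⟫ - ⟪gradient f q, Minv gg⟫ = ⟪Minv gg, gg⟫ := by
      rw [← inner_sub_left, ← hgg, real_inner_comm]
    have hgen4 : ∀ X : ℝ, L * (1/2 * (1/L * (1/L * X))) = 1/(2*L) * X := by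
      intro X; field_simp
    have hgen6 : ∀ X : ℝ, 1/L * X = 2 * (1/(2*L) * X) := by
      intro X; field_simp
    have h4 : L * (1/2 * (1/L * (1/L * ⟪gg, Minv gg⟫))) = 1/(2*L) * ⟪Minv gg, gg⟫ := by
      rw [real_inner_comm gg (Minv gg)]; exact hgen4 _
    have h6 : 1/L * ⟪Minv gg, gg⟫ = 2 * (1/(2*L) * ⟪Minv gg, gg⟫) := hgen6 _
    have h5 : 1/L * ⟪gradient f p, Minv gg⟫ - 1/L * ⟪gradient f q, Minv gg⟫ =
        1/L * ⟪Minv gg, gg⟫ := by rw [← mul_sub, h3]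
    rw [h4] at h2
    linarith [h1', h2, h5, h6]
  -- main computation
  intro ξ₁ ξ₂
  have heq : eM ξ₁ - eM ξ₂ = (ξ₁ - ξ₂) - M (U ξ₁ - U ξ₂) := by
    rw [heM, heM, hgradstar, hgradstar, map_sub]
    abel
  have hkey : ∀ g d : EuclideanSpace ℝ (Fin n),
      ⟪Minv (g - M d), g - M d⟫ = ⟪Minv g, g⟫ - 2 * ⟪g, d⟫ + ⟪M d, d⟫ := by
    intro g d
    have h1 : ⟪Minv (g - M d), g - M d⟫ =
        ⟪Minv g, g⟫ - ⟪Minv g, M d⟫ - ⟪Minv (M d), g⟫ + ⟪Minv (M d), M d⟫ := by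
      simp only [map_sub, inner_sub_left, inner_sub_right]
      ring
    rw [h1, hidM, hMinvsym g (M d), hidM, real_inner_comm d g, real_inner_comm d (M d)]
    ring
  have hexp : ⟪Minv (eM ξ₁ - eM ξ₂), eM ξ₁ - eM ξ₂⟫ =
      ⟪Minv (ξ₁ - ξ₂), ξ₁ - ξ₂⟫ - 2 * ⟪ξ₁ - ξ₂, U ξ₁ - U ξ₂⟫
        + ⟪M (U ξ₁ - U ξ₂), U ξ₁ - U ξ₂⟫ := by
    rw [heq]
    exact hkey (ξ₁ - ξ₂) (U ξ₁ - U ξ₂)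
  have hA : μ * ⟪M (U ξ₁ - U ξ₂), U ξ₁ - U ξ₂⟫ ≤ ⟪ξ₁ - ξ₂, U ξ₁ - U ξ₂⟫ := by
    have := hmono (U ξ₁) (U ξ₂)
    rw [hU, hU] at this
    exact this
  have hB : ⟪Minv (ξ₁ - ξ₂), ξ₁ - ξ₂⟫ ≤ L * ⟪ξ₁ - ξ₂, U ξ₁ - U ξ₂⟫ := by
    have k1 := hcoco (U ξ₁) (U ξ₂)
    have k2 := hcoco (U ξ₂) (U ξ₁)
    rw [hU, hU] at k1 k2
    have e3 : ξ₂ - ξ₁ = -(ξ₁ - ξ₂) := by abel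
    have e4 : U ξ₂ - U ξ₁ = -(U ξ₁ - U ξ₂) := by abel
    rw [e3, e4, map_neg, inner_neg_neg, inner_neg_right] at k2
    have hsum : 1/L * ⟪Minv (ξ₁ - ξ₂), ξ₁ - ξ₂⟫ ≤ ⟪ξ₁ - ξ₂, U ξ₁ - U ξ₂⟫ := by
      rw [inner_sub_left]
      have hgen6 : ∀ X : ℝ, 1/L * X = 2 * (1/(2*L) * X) := by
        intro X; field_simp
      have h6 : 1/L * ⟪Minv (ξ₁ - ξ₂), ξ₁ - ξ₂⟫ =
          2 * (1/(2*L) * ⟪Minv (ξ₁ - ξ₂), ξ₁ - ξ₂⟫) := hgen6 _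
      linarith [k1, k2, h6]
    have h7 := mul_le_mul_of_nonneg_left hsum hL0.le
    have hgen8 : ∀ X : ℝ, L * (1/L * X) = X := by
      intro X; field_simp
    have h8 : L * (1/L * ⟪Minv (ξ₁ - ξ₂), ξ₁ - ξ₂⟫) = ⟪Minv (ξ₁ - ξ₂), ξ₁ - ξ₂⟫ := hgen8 _
    rw [h8] at h7
    exact h7
  rw [hexp]
  have t1 : (0:ℝ) ≤ (2*μ - 1) * (L * ⟪ξ₁ - ξ₂, U ξ₁ - U ξ₂⟫ - ⟪Minv (ξ₁ - ξ₂), ξ₁ - ξ₂⟫) :=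
    mul_nonneg (by linarith) (by linarith [hB])
  have t2 : (0:ℝ) ≤ L * (⟪ξ₁ - ξ₂, U ξ₁ - U ξ₂⟫ - μ * ⟪M (U ξ₁ - U ξ₂), U ξ₁ - U ξ₂⟫) :=
    mul_nonneg hL0.le (by linarith [hA])
  have h1 : (2*μ - 1)/(μ*L) * ⟪Minv (ξ₁ - ξ₂), ξ₁ - ξ₂⟫ ≤
      2 * ⟪ξ₁ - ξ₂, U ξ₁ - U ξ₂⟫ - ⟪M (U ξ₁ - U ξ₂), U ξ₁ - U ξ₂⟫ := by
    rw [div_mul_eq_mul_div, div_le_iff₀ (mul_pos hμ0 hL0)]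
    nlinarith [t1, t2]
  calc ⟪Minv (ξ₁ - ξ₂), ξ₁ - ξ₂⟫ - 2 * ⟪ξ₁ - ξ₂, U ξ₁ - U ξ₂⟫
      + ⟪M (U ξ₁ - U ξ₂), U ξ₁ - U ξ₂⟫
      ≤ ⟪Minv (ξ₁ - ξ₂), ξ₁ - ξ₂⟫ - (2*μ - 1)/(μ*L) * ⟪Minv (ξ₁ - ξ₂), ξ₁ - ξ₂⟫ := by
        linarith [h1]
    _ = (1 - (2*μ - 1)/(μ*L)) * ⟪Minv (ξ₁ - ξ₂), ξ₁ - ξ₂⟫ := by ring
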